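/- Let k be an algebraically closed field and A a finitely generated commutative k-algebra without zero divisors. Then for every finite index set I, the tensor product over k of copies of A indexed by I (the k-algebra A^{⊗I}) has no zero divisors. -/

import Mathlib

open scoped TensorProduct
open PiTensorProduct Function

section NSS
variable {k A : Type} [Field k] [IsAlgClosed k] [CommRing A] [IsDomain A] [Algebra k A]

lemma exists_algHom_ker_eq (hA : Algebra.FiniteType k A) (m : Ideal A) (hm : m.IsMaximal) :
    ∃ φ : A →ₐ[k] k, RingHom.ker (φ : A →+* k) = m := by
  letI : Field (A ⧸ m) := Ideal.Quotient.field m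
  obtain ⟨n, p, hp⟩ := Algebra.FiniteType.iff_quotient_mvPolynomial''.mp hA
  let f : MvPolynomial (Fin n) k →ₐ[k] A ⧸ m := (Ideal.Quotient.mkₐ k m).comp p
  have hf : Function.Surjective f := (Ideal.Quotient.mkₐ_surjective k m).comp hp
  have hint : ((f : MvPolynomial (Fin n) k →+* A ⧸ m).comp MvPolynomial.C).IsIntegral :=
    MvPolynomial.comp_C_integral_of_surjective_of_isJacobsonRing _ hf
  have heq : ((f : MvPolynomial (Fin n) k →+* A ⧸ m).comp MvPolynomial.C)
      = algebraMap k (A ⧸ m) := by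
    ext r
    simpa [← MvPolynomial.algebraMap_eq] using f.commutes r
  rw [heq] at hint
  have hsurj : Function.Surjective (algebraMap k (A ⧸ m)) :=
    (IsAlgClosed.ringHom_bijective_of_isIntegral _ hint).2
  have hinj : Function.Injective (algebraMap k (A ⧸ m)) := (algebraMap k (A ⧸ m)).injective
  let e : k ≃+* A ⧸ m := RingEquiv.ofBijective _ ⟨hinj, hsurj⟩
  have hmk : ∀ r : k, Ideal.Quotient.mk m (algebraMap k A r) = algebraMap k (A ⧸ m) r := by
    intro r
    rw [IsScalarTower.algebraMap_apply k A (A ⧸ m)]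
    rfl
  refine ⟨⟨(e.symm : (A ⧸ m) →+* k).comp (Ideal.Quotient.mk m), fun r => ?_⟩, ?_⟩
  · show e.symm (Ideal.Quotient.mk m (algebraMap k A r)) = r
    rw [hmk]
    exact e.symm_apply_apply r
  · ext a
    rw [RingHom.mem_ker]
    show e.symm (Ideal.Quotient.mk m a) = 0 ↔ a ∈ m
    rw [show (e.symm (Ideal.Quotient.mk m a) = 0) ↔ (Ideal.Quotient.mk m a = 0) from
      ⟨fun h => e.symm.injective (by simpa using h), fun h => by simp [h]⟩,
      Ideal.Quotient.eq_zero_iff_mem]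

lemma tensor_noZeroDivisors (hA : Algebra.FiniteType k A) (B : Type) [CommRing B] [Algebra k B]
    [NoZeroDivisors B] : NoZeroDivisors (A ⊗[k] B) := by
  classical
  constructor
  intro x y hxy
  by_contra hc
  push_neg at hc
  obtain ⟨hx, hy⟩ := hc
  haveI := hA
  haveI : IsJacobsonRing A := isJacobsonRing_of_finiteType (A := k)
  set c := Module.Basis.ofVectorSpace k B with hc
  set d := c.baseChange A with hd
  -- the evaluation alg homs
  let Φ : (A →ₐ[k] k) → (A ⊗[k] B →ₐ[k] B) := fun φ =>
    Algebra.TensorProduct.lift ((Algebra.ofId k B).comp φ) (AlgHom.id k B)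
      (fun _ _ => Commute.all _ _)
  have key : ∀ (φ : A →ₐ[k] k) (z : A ⊗[k] B) (i), c.repr (Φ φ z) i = φ (d.repr z i) := by
    intro φ z i
    induction z using TensorProduct.induction_on with
    | zero => simp
    | tmul a b =>
        simp only [Φ, Algebra.TensorProduct.lift_tmul, AlgHom.coe_comp, Function.comp_apply,
          Algebra.ofId_apply, AlgHom.coe_id, id_eq, hd, Module.Basis.baseChange_repr_tmul]
        rw [← Algebra.smul_def]
        simp [mul_comm]
    | add u v hu hv => simp [map_add, hu, hv]
  -- ideals of coefficients
  set Ix := Ideal.span (Set.range (d.repr x)) with hIx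
  set Iy := Ideal.span (Set.range (d.repr y)) with hIy
  have hmax : ∀ m : Ideal A, m.IsMaximal → Ix * Iy ≤ m := by
    intro m hm
    obtain ⟨φ, hker⟩ := exists_algHom_ker_eq hA m hm
    have hΦ : Φ φ x * Φ φ y = 0 := by rw [← _root_.map_mul, hxy, map_zero]
    have h0 : Φ φ x = 0 ∨ Φ φ y = 0 := mul_eq_zero.mp hΦ
    have hzero : ∀ z : A ⊗[k] B, Φ φ z = 0 →
        Ideal.span (Set.range (d.repr z)) ≤ RingHom.ker (φ : A →+* k) := by
      intro z hz
      refine Ideal.span_le.mpr ?_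
      rintro _ ⟨i, rfl⟩
      rw [SetLike.mem_coe, RingHom.mem_ker]
      have hk := key φ z i
      rw [hz] at hk
      simpa using hk.symm
    have hle : Ix ≤ RingHom.ker (φ : A →+* k) ∨ Iy ≤ RingHom.ker (φ : A →+* k) :=
      h0.imp (hzero x) (hzero y)
    rw [hker] at hle
    rcases hle with h | h
    · exact le_trans Ideal.mul_le_left h
    · exact le_trans Ideal.mul_le_right h
  have hbot : Ix * Iy = ⊥ := by
    have hjac : (⊥ : Ideal A).jacobson = ⊥ :=
      (IsJacobsonRing.out' (⊥ : Ideal A)) (Ideal.bot_prime.isRadical)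
    rw [← le_bot_iff, ← hjac, Ideal.jacobson]
    exact le_sInf fun J hJ => hmax J hJ.2
  rcases Ideal.mul_eq_bot.mp hbot with h | h
  · apply hx
    have : d.repr x = 0 := by
      ext i
      have : d.repr x i ∈ Ix := Ideal.subset_span ⟨i, rfl⟩
      rw [h] at this
      simpa using this
    simpa using d.repr.map_eq_zero_iff.mp this
  · apply hy
    have : d.repr y = 0 := by
      ext i
      have : d.repr y i ∈ Iy := Ideal.subset_span ⟨i, rfl⟩
      rw [h] at this
      simpa using this
    simpa using d.repr.map_eq_zero_iff.mp this

end NSS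

section StepB
variable {k A : Type} [Field k] [CommRing A] [Algebra k A]

lemma piTensor_isEmptyEquiv_mul {ι : Type} [IsEmpty ι] (x y : ⨂[k] (_ : ι), A) :
    isEmptyEquiv ι (x * y) = isEmptyEquiv ι x * isEmptyEquiv ι y := by
  induction x using PiTensorProduct.induction_on with
  | smul_tprod r f =>
    induction y using PiTensorProduct.induction_on with
    | smul_tprod s g =>
        rw [smul_tprod_mul_smul_tprod]
        simp [isEmptyEquiv_apply_tprod, smul_mul_smul_comm]
    | add a b ha hb =>
        rw [mul_add, map_add, ha, hb, map_add, mul_add]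
  | add a b ha hb => rw [add_mul, map_add, ha, hb, map_add, add_mul]

lemma piTensor_reindex_mul {ι ι₂ : Type} (e : ι ≃ ι₂) (x y : ⨂[k] (_ : ι), A) :
    reindex k (fun _ : ι => A) e (x * y)
      = reindex k (fun _ : ι => A) e x * reindex k (fun _ : ι => A) e y := by
  induction x using PiTensorProduct.induction_on with
  | smul_tprod r f =>
    induction y using PiTensorProduct.induction_on with
    | smul_tprod s g =>
        rw [smul_tprod_mul_smul_tprod]
        simp only [map_smul, reindex_tprod, smul_tprod_mul_smul_tprod]
        congr 1
    | add a b ha hb =>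
        rw [mul_add, map_add, ha, hb, map_add, mul_add]
  | add a b ha hb => rw [add_mul, map_add, ha, hb, map_add, add_mul]

/-- Splitting off the `none` factor of a tensor product indexed by `Option ι`. -/
noncomputable def piTensorOptionEquiv (ι : Type) :
    (⨂[k] (_ : Option ι), A) ≃ₗ[k] A ⊗[k] (⨂[k] (_ : ι), A) :=
  (reindex k (fun _ : Option ι => A)
      (((Equiv.optionEquivSumPUnit ι).trans (Equiv.sumComm ι PUnit) :
        Option ι ≃ (PUnit.{1} ⊕ ι)))) ≪≫ₗ
    (tmulEquiv k A).symm ≪≫ₗ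
      TensorProduct.congr (subsingletonEquiv PUnit.unit) (LinearEquiv.refl k _)

lemma piTensorOptionEquiv_tprod (ι : Type) (f : Option ι → A) :
    piTensorOptionEquiv (k := k) ι (tprod k f)
      = f none ⊗ₜ[k] tprod k (fun i => f (some i)) := by
  simp [piTensorOptionEquiv, reindex_tprod, tmulEquiv_symm_apply,
    subsingletonEquiv_apply_tprod]

set_option maxHeartbeats 1000000 in
set_option synthInstance.maxHeartbeats 400000 in
lemma piTensorOptionEquiv_mul (ι : Type) (x y : ⨂[k] (_ : Option ι), A) :
    piTensorOptionEquiv (k := k) ι (x * y)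
      = piTensorOptionEquiv (k := k) ι x * piTensorOptionEquiv (k := k) ι y := by
  induction x using PiTensorProduct.induction_on with
  | smul_tprod r f =>
    induction y using PiTensorProduct.induction_on with
    | smul_tprod s g =>
        rw [smul_tprod_mul_smul_tprod, LinearEquiv.map_smul, LinearEquiv.map_smul,
          LinearEquiv.map_smul, piTensorOptionEquiv_tprod, piTensorOptionEquiv_tprod,
          piTensorOptionEquiv_tprod, smul_mul_smul_comm,
          Algebra.TensorProduct.tmul_mul_tmul, tprod_mul_tprod]
        rfl
    | add a b ha hb =>
        rw [mul_add, LinearEquiv.map_add, ha, hb, LinearEquiv.map_add, mul_add]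
  | add a b ha hb => rw [add_mul, LinearEquiv.map_add, ha, hb, LinearEquiv.map_add, add_mul]

end StepB

/-- Let `k` be an algebraically closed field and `A` a finitely
generated commutative `k`-algebra without zero divisors.  Then for every finite index
set `I`, the tensor product over `k` of copies of `A` indexed by `I` has no zero
divisors. -/
theorem piTensorProduct_noZeroDivisors (k A : Type) [Field k] [IsAlgClosed k]
    [CommRing A] [IsDomain A] [Algebra k A] (hA : Algebra.FiniteType k A)
    (I : Type) [Fintype I] :
    NoZeroDivisors (⨂[k] (_ : I), A) := by
  induction I using Finite.induction_empty_option with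
  | of_equiv e h =>
      haveI := h
      exact Function.Injective.noZeroDivisors
        (⇑(PiTensorProduct.reindex k (fun _ => A) e.symm))
        (PiTensorProduct.reindex k (fun _ => A) e.symm).injective
        (map_zero _) (piTensor_reindex_mul e.symm)
  | h_empty =>
      exact Function.Injective.noZeroDivisors
        (⇑(isEmptyEquiv (R := k) (s := fun _ : PEmpty => A) PEmpty))
        (isEmptyEquiv PEmpty).injective
        (map_zero _) (piTensor_isEmptyEquiv_mul)
  | @h_option α _ h =>
      haveI := h
      haveI : NoZeroDivisors (A ⊗[k] (⨂[k] (_ : α), A)) := tensor_noZeroDivisors hA _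
      exact Function.Injective.noZeroDivisors
        (⇑(piTensorOptionEquiv (k := k) (A := A) α))
        (piTensorOptionEquiv α).injective
        ((piTensorOptionEquiv (k := k) (A := A) α).map_zero) (piTensorOptionEquiv_mul α)
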